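/- Let m₁, m₂, m₃ be positive integers with m₁ ≤ m₂ ≤ m₃. Then the following are equivalent: (I) there exist positive integers n₁, n₂, n₃ with nᵢmᵢ ≥ 2 for all i, with nᵢ ≥ 2 for at least one i, and with ∑_{i=1}^3 1/(nᵢmᵢ) ≥ 1; (II) one of the following holds: (m₁,m₂,m₃) = (1,1,1); m₁ = m₂ = 1 and m₃ ≥ 2; m₁ = 1, m₂ = 2 and m₃ ≥ 2; m₁ = 1, m₂ = 3 and m₃ ∈ {3,4,5,6}; (m₁,m₂,m₃) = (1,4,4); m₁ = m₂ = 2 and m₃ ≥ 2; (m₁,m₂,m₃) = (2,3,3). -/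

import Mathlib

lemma rat_ineq (a b c : ℤ) (ha : 0 < a) (hb : 0 < b) (hc : 0 < c) :
    (1 ≤ 1/(a:ℚ) + 1/(b:ℚ) + 1/(c:ℚ)) ↔ a*b*c ≤ b*c + a*c + a*b := by
  have key : (1/(a:ℚ)+1/b+1/c) - 1 = ((b*c+a*c+a*b - a*b*c : ℤ) : ℚ) / ((a*b*c : ℤ) : ℚ) := by
    have ha' : (0:ℚ) < a := by exact_mod_cast ha
    have hb' : (0:ℚ) < b := by exact_mod_cast hb
    have hc' : (0:ℚ) < c := by exact_mod_cast hc
    push_cast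
    field_simp
  rw [← sub_nonneg, key, le_div_iff₀ (by push_cast [show (0:ℤ) < a*b*c by positivity]; positivity), zero_mul]
  rw [show ((0:ℚ) = ((0:ℤ):ℚ)) by norm_cast, Int.cast_le]
  omega

lemma pair1 (n A B : ℤ) (hn : 2 ≤ n) (hA : 0 ≤ A) (hB : 0 ≤ B)
    (h : n*A*B ≤ A*B + n*B + n*A) : A*B ≤ 2*(A+B) := by
  by_contra h'
  push_neg at h'
  nlinarith [mul_nonneg (by linarith : (0:ℤ) ≤ n-2) (by linarith : (0:ℤ) ≤ A*B - 2*A - 2*B),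
    mul_nonneg (by linarith : (0:ℤ) ≤ n-2) hA, mul_nonneg (by linarith : (0:ℤ) ≤ n-2) hB]

lemma pair2 (n A B : ℤ) (hn : 1 ≤ n) (hA : 0 ≤ A) (hB : 0 ≤ B)
    (h : 2*n*A*B ≤ A*B + 2*n*B + 2*n*A) : A*B ≤ 2*(A+B) := by
  by_contra h'
  push_neg at h'
  nlinarith [mul_nonneg (by linarith : (0:ℤ) ≤ n-1) (by linarith : (0:ℤ) ≤ A*B - 2*A - 2*B),
    mul_nonneg (by linarith : (0:ℤ) ≤ n-1) hA, mul_nonneg (by linarith : (0:ℤ) ≤ n-1) hB]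

lemma pair3 (n A B : ℤ) (hn : 1 ≤ n) (hA : 0 ≤ A) (hB : 0 ≤ B)
    (h : 3*n*A*B ≤ A*B + 3*n*B + 3*n*A) : 2*(A*B) ≤ 3*(A+B) := by
  by_contra h'
  push_neg at h'
  nlinarith [mul_nonneg (by linarith : (0:ℤ) ≤ n-1) (by linarith : (0:ℤ) ≤ 2*(A*B) - 3*A - 3*B),
    mul_nonneg (mul_nonneg (by linarith : (0:ℤ) ≤ n) hA) hB]

set_option maxHeartbeats 1600000 in
/-- Characterization of the triples of branch determinants `m₁ ≤ m₂ ≤ m₃` for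
which suitable weights `n₁, n₂, n₃` exist (Proposition 7.7). -/
theorem branch_determinants_classification
    (m₁ m₂ m₃ : ℤ) (hm₁ : 1 ≤ m₁) (hm₂ : 1 ≤ m₂) (hm₃ : 1 ≤ m₃)
    (h₁₂ : m₁ ≤ m₂) (h₂₃ : m₂ ≤ m₃) :
    (∃ n₁ n₂ n₃ : ℤ, 1 ≤ n₁ ∧ 1 ≤ n₂ ∧ 1 ≤ n₃ ∧
        2 ≤ n₁ * m₁ ∧ 2 ≤ n₂ * m₂ ∧ 2 ≤ n₃ * m₃ ∧
        (2 ≤ n₁ ∨ 2 ≤ n₂ ∨ 2 ≤ n₃) ∧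
        1 ≤ 1 / ((n₁ : ℚ) * (m₁ : ℚ)) + 1 / ((n₂ : ℚ) * (m₂ : ℚ))
          + 1 / ((n₃ : ℚ) * (m₃ : ℚ))) ↔
      ((m₁ = 1 ∧ m₂ = 1 ∧ m₃ = 1) ∨
       (m₁ = 1 ∧ m₂ = 1 ∧ 2 ≤ m₃) ∨
       (m₁ = 1 ∧ m₂ = 2 ∧ 2 ≤ m₃) ∨
       (m₁ = 1 ∧ m₂ = 3 ∧ (m₃ = 3 ∨ m₃ = 4 ∨ m₃ = 5 ∨ m₃ = 6)) ∨
       (m₁ = 1 ∧ m₂ = 4 ∧ m₃ = 4) ∨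
       (m₁ = 2 ∧ m₂ = 2 ∧ 2 ≤ m₃) ∨
       (m₁ = 2 ∧ m₂ = 3 ∧ m₃ = 3)) := by
  have cast_eq : ∀ n m : ℤ, ((n : ℚ) * (m : ℚ)) = (((n*m : ℤ)) : ℚ) := by
    intro n m; push_cast; ring
  constructor
  · rintro ⟨n₁, n₂, n₃, hn₁, hn₂, hn₃, hp₁, hp₂, hp₃, hor, hsum⟩
    rw [cast_eq n₁ m₁, cast_eq n₂ m₂, cast_eq n₃ m₃,
      rat_ineq _ _ _ (by linarith) (by linarith) (by linarith)] at hsum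
    have hA0 : (0:ℤ) ≤ n₂ * m₂ := by positivity
    have hB0 : (0:ℤ) ≤ n₃ * m₃ := by positivity
    have hAm : m₂ ≤ n₂ * m₂ := le_mul_of_one_le_left (by linarith) hn₂
    have hBm : m₃ ≤ n₃ * m₃ := le_mul_of_one_le_left (by linarith) hn₃
    have hm1_le : m₁ ≤ 3 := by
      by_contra h'
      push_neg at h'
      have h1 : 4 ≤ n₁ * m₁ := le_trans (by linarith) (le_mul_of_one_le_left (by linarith) hn₁)
      have h2 : 4 ≤ n₂ * m₂ := le_trans (by linarith) hAm
      have h3 : 4 ≤ n₃ * m₃ := le_trans (by linarith) hBm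
      nlinarith [mul_nonneg (by linarith : (0:ℤ) ≤ n₁*m₁ - 4) (by linarith : (0:ℤ) ≤ n₂*m₂ - 4),
        mul_nonneg (by linarith : (0:ℤ) ≤ n₁*m₁ - 4) (by linarith : (0:ℤ) ≤ n₃*m₃ - 4),
        mul_nonneg (by linarith : (0:ℤ) ≤ n₂*m₂ - 4) (by linarith : (0:ℤ) ≤ n₃*m₃ - 4),
        mul_nonneg (mul_nonneg (by linarith : (0:ℤ) ≤ n₁*m₁ - 4) (by linarith : (0:ℤ) ≤ n₂*m₂ - 4))
          (by linarith : (0:ℤ) ≤ n₃*m₃ - 4)]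
    interval_cases m₁
    · -- m₁ = 1
      have hn₁2 : 2 ≤ n₁ := by linarith [hp₁]
      have hAB : (n₂*m₂)*(n₃*m₃) ≤ 2*((n₂*m₂)+(n₃*m₃)) :=
        pair1 n₁ _ _ hn₁2 hA0 hB0 (by linarith)
      have hm2_le : m₂ ≤ 4 := by
        by_contra h'
        push_neg at h'
        have h2 : 5 ≤ n₂ * m₂ := le_trans (by linarith) hAm
        have h3 : 5 ≤ n₃ * m₃ := le_trans (by linarith) hBm
        nlinarith [mul_nonneg (by linarith : (0:ℤ) ≤ n₂*m₂ - 5) (by linarith : (0:ℤ) ≤ n₃*m₃ - 5)]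
      interval_cases m₂
      · rcases eq_or_lt_of_le hm₃ with h | h
        · exact Or.inl ⟨rfl, rfl, h.symm⟩
        · exact Or.inr (Or.inl ⟨rfl, rfl, by linarith⟩)
      · exact Or.inr (Or.inr (Or.inl ⟨rfl, rfl, by linarith⟩))
      · have hm3_le : m₃ ≤ 6 := by
          by_contra h'
          push_neg at h'
          have h3 : 7 ≤ n₃ * m₃ := le_trans (by linarith) hBm
          nlinarith [mul_nonneg (by linarith : (0:ℤ) ≤ n₂*3 - 3) (by linarith : (0:ℤ) ≤ n₃*m₃ - 7)]
        exact Or.inr (Or.inr (Or.inr (Or.inl ⟨rfl, rfl, by omega⟩)))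
      · have hm3_le : m₃ ≤ 4 := by
          by_contra h'
          push_neg at h'
          have h3 : 5 ≤ n₃ * m₃ := le_trans (by linarith) hBm
          nlinarith [mul_nonneg (by linarith : (0:ℤ) ≤ n₂*4 - 4) (by linarith : (0:ℤ) ≤ n₃*m₃ - 5)]
        exact Or.inr (Or.inr (Or.inr (Or.inr (Or.inl ⟨rfl, rfl, by omega⟩))))
    · -- m₁ = 2
      have hAB : (n₂*m₂)*(n₃*m₃) ≤ 2*((n₂*m₂)+(n₃*m₃)) :=
        pair2 n₁ _ _ hn₁ hA0 hB0 (by linarith)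
      have hm2_le : m₂ ≤ 4 := by
        by_contra h'
        push_neg at h'
        have h2 : 5 ≤ n₂ * m₂ := le_trans (by linarith) hAm
        have h3 : 5 ≤ n₃ * m₃ := le_trans (by linarith) hBm
        nlinarith [mul_nonneg (by linarith : (0:ℤ) ≤ n₂*m₂ - 5) (by linarith : (0:ℤ) ≤ n₃*m₃ - 5)]
      interval_cases m₂
      · exact Or.inr (Or.inr (Or.inr (Or.inr (Or.inr (Or.inl ⟨rfl, rfl, by linarith⟩)))))
      · have hm3 : m₃ = 3 := by
          have hA3 : 3 ≤ n₂ * 3 := by linarith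
          have hB3 : 3 ≤ n₃ * m₃ := le_trans (by linarith) hBm
          rcases hor with h | h | h
          · exfalso
            nlinarith [mul_nonneg (by linarith : (0:ℤ) ≤ n₁-2) (by linarith : (0:ℤ) ≤ n₂*3 - 3),
              mul_nonneg (by linarith : (0:ℤ) ≤ n₁-2) (by linarith : (0:ℤ) ≤ n₃*m₃ - 3),
              mul_nonneg (by linarith : (0:ℤ) ≤ n₂*3 - 3) (by linarith : (0:ℤ) ≤ n₃*m₃ - 3),
              mul_nonneg (mul_nonneg (by linarith : (0:ℤ) ≤ n₁-2) (by linarith : (0:ℤ) ≤ n₂*3 - 3))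
                (by linarith : (0:ℤ) ≤ n₃*m₃ - 3)]
          · -- 2 ≤ n₂, so A ≥ 6
            have hA6 : 6 ≤ n₂ * 3 := by linarith
            by_contra h'
            have hB4 : 4 ≤ n₃ * m₃ := le_trans (by omega) hBm
            nlinarith [mul_nonneg (by linarith : (0:ℤ) ≤ n₂*3 - 6) (by linarith : (0:ℤ) ≤ n₃*m₃ - 4)]
          · -- 2 ≤ n₃
            by_contra h'
            have hm3' : 4 ≤ m₃ := by omega
            have hB8 : 8 ≤ n₃ * m₃ := by nlinarith
            nlinarith [mul_nonneg (by linarith : (0:ℤ) ≤ n₂*3 - 3) (by linarith : (0:ℤ) ≤ n₃*m₃ - 8)]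
        exact Or.inr (Or.inr (Or.inr (Or.inr (Or.inr (Or.inr ⟨rfl, rfl, hm3⟩)))))
      · exfalso
        have hA4 : 4 ≤ n₂ * 4 := by linarith
        have hB4 : 4 ≤ n₃ * m₃ := le_trans (by linarith) hBm
        rcases hor with h | h | h
        · nlinarith [mul_nonneg (by linarith : (0:ℤ) ≤ n₁-2) (by linarith : (0:ℤ) ≤ n₂*4 - 4),
            mul_nonneg (by linarith : (0:ℤ) ≤ n₁-2) (by linarith : (0:ℤ) ≤ n₃*m₃ - 4),
            mul_nonneg (by linarith : (0:ℤ) ≤ n₂*4 - 4) (by linarith : (0:ℤ) ≤ n₃*m₃ - 4),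
            mul_nonneg (mul_nonneg (by linarith : (0:ℤ) ≤ n₁-2) (by linarith : (0:ℤ) ≤ n₂*4 - 4))
              (by linarith : (0:ℤ) ≤ n₃*m₃ - 4)]
        · have hA8 : 8 ≤ n₂ * 4 := by linarith
          nlinarith [mul_nonneg (by linarith : (0:ℤ) ≤ n₂*4 - 8) (by linarith : (0:ℤ) ≤ n₃*m₃ - 4)]
        · have hB8 : 8 ≤ n₃ * m₃ := by nlinarith
          nlinarith [mul_nonneg (by linarith : (0:ℤ) ≤ n₂*4 - 4) (by linarith : (0:ℤ) ≤ n₃*m₃ - 8)]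
    · -- m₁ = 3
      exfalso
      have hA3 : 3 ≤ n₂ * m₂ := le_trans (by linarith) hAm
      have hB3 : 3 ≤ n₃ * m₃ := le_trans (by linarith) hBm
      have hAB : 2*((n₂*m₂)*(n₃*m₃)) ≤ 3*((n₂*m₂)+(n₃*m₃)) :=
        pair3 n₁ _ _ hn₁ hA0 hB0 (by linarith)
      rcases hor with h | h | h
      · nlinarith [mul_nonneg (by linarith : (0:ℤ) ≤ n₁-2) (by linarith : (0:ℤ) ≤ n₂*m₂ - 3),
          mul_nonneg (by linarith : (0:ℤ) ≤ n₁-2) (by linarith : (0:ℤ) ≤ n₃*m₃ - 3),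
          mul_nonneg (by linarith : (0:ℤ) ≤ n₂*m₂ - 3) (by linarith : (0:ℤ) ≤ n₃*m₃ - 3),
          mul_nonneg (mul_nonneg (by linarith : (0:ℤ) ≤ n₁-2) (by linarith : (0:ℤ) ≤ n₂*m₂ - 3))
            (by linarith : (0:ℤ) ≤ n₃*m₃ - 3)]
      · have hA6 : 6 ≤ n₂ * m₂ := by nlinarith
        nlinarith [mul_nonneg (by linarith : (0:ℤ) ≤ n₂*m₂ - 6) (by linarith : (0:ℤ) ≤ 2*(n₃*m₃) - 3)]
      · have hB6 : 6 ≤ n₃ * m₃ := by nlinarith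
        nlinarith [mul_nonneg (by linarith : (0:ℤ) ≤ 2*(n₂*m₂) - 3) (by linarith : (0:ℤ) ≤ n₃*m₃ - 6)]
  · rintro (⟨e₁, e₂, e₃⟩ | ⟨e₁, e₂, e₃⟩ | ⟨e₁, e₂, e₃⟩ | ⟨e₁, e₂, e₃⟩ | ⟨e₁, e₂, e₃⟩ |
      ⟨e₁, e₂, e₃⟩ | ⟨e₁, e₂, e₃⟩) <;> subst e₁ <;> subst e₂
    · exact ⟨2, 2, 2, by norm_num [e₃]⟩
    · refine ⟨2, 2, 1, by norm_num, by norm_num, by norm_num, by norm_num, by norm_num,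
        by linarith, Or.inl le_rfl, ?_⟩
      have : (0:ℚ) < (m₃ : ℚ) := by exact_mod_cast (by linarith : (0:ℤ) < m₃)
      have h1 : (0:ℚ) ≤ 1 / ((1:ℚ) * (m₃:ℚ)) := by positivity
      push_cast
      linarith
    · refine ⟨2, 1, 1, by norm_num, by norm_num, by norm_num, by norm_num, by norm_num,
        by linarith, Or.inl le_rfl, ?_⟩
      have : (0:ℚ) < (m₃ : ℚ) := by exact_mod_cast (by linarith : (0:ℤ) < m₃)
      have h1 : (0:ℚ) ≤ 1 / ((1:ℚ) * (m₃:ℚ)) := by positivity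
      push_cast
      linarith
    · rcases e₃ with e₃ | e₃ | e₃ | e₃ <;> subst e₃ <;> exact ⟨2, 1, 1, by norm_num⟩
    · exact ⟨2, 1, 1, by norm_num [e₃]⟩
    · refine ⟨1, 1, 2, by norm_num, by norm_num, by norm_num, by norm_num, by norm_num,
        by linarith, Or.inr (Or.inr le_rfl), ?_⟩
      have : (0:ℚ) < (m₃ : ℚ) := by exact_mod_cast (by linarith : (0:ℤ) < m₃)
      have h1 : (0:ℚ) ≤ 1 / ((2:ℚ) * (m₃:ℚ)) := by positivity
      push_cast
      linarith
    · exact ⟨1, 1, 2, by norm_num [e₃]⟩
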